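/- arXiv:2512.04059 — 2 statements merged into one kernel-verified Lean document; each statement's English description precedes it below -/
import Mathlib

section
/- Let (u_n) be a sequence of real numbers with inf_n u_n > 0 and let (ε_n) be a sequence of real numbers with ε_n → 0. Then there exist a constant C < ∞ and an index N such that for all n ≥ N, |Ψ(u_n + ε_n) − Ψ(u_n)·exp(−u_n ε_n)| ≤ C·(|ε_n|/u_n + ε_n²)·Ψ(u_n)·exp(−u_n ε_n). -/
open MeasureTheory

/-- The standard normal density `φ(z) = (2π)^{-1/2} exp(−z²/2)`. -/
noncomputable def phi (x : ℝ) : ℝ := (Real.sqrt (2 * Real.pi))⁻¹ * Real.exp (-x ^ 2 / 2)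

/-- The standard Gaussian survival function `Ψ(x) = ∫_x^∞ φ(z) dz`. -/
noncomputable def Psi (x : ℝ) : ℝ := ∫ z in Set.Ioi x, phi z

open Set Filter

lemma phi_pos (x : ℝ) : 0 < phi x := by
  unfold phi
  positivity

lemma integrable_phi : Integrable phi := by
  have h := integrable_exp_neg_mul_sq (by norm_num : (0:ℝ) < 1/2)
  have : phi = fun x => (Real.sqrt (2 * Real.pi))⁻¹ * Real.exp (-(1/2) * x ^ 2) := by
    funext x; unfold phi; ring_nf
  rw [this]
  exact h.const_mul _

lemma integrable_mul_phi : Integrable (fun x => x * phi x) := by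
  have h := integrable_mul_exp_neg_mul_sq (by norm_num : (0:ℝ) < 1/2)
  have : (fun x => x * phi x) = fun x => (Real.sqrt (2 * Real.pi))⁻¹ * (x * Real.exp (-(1/2) * x ^ 2)) := by
    funext x; unfold phi; ring_nf
  rw [this]
  exact h.const_mul _

lemma integral_Ioi_shift (f : ℝ → ℝ) (x c : ℝ) :
    ∫ t in Set.Ioi x, f (t + c) = ∫ s in Set.Ioi (x + c), f s := by
  have h := setIntegral_map_equiv (μ := (volume : Measure ℝ))
      (MeasurableEquiv.addRight c) f (Set.Ioi (x + c))
  have hm : Measure.map (⇑(MeasurableEquiv.addRight c)) volume = volume := by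
    have : ⇑(MeasurableEquiv.addRight c) = fun y : ℝ => y + c := rfl
    rw [this, map_add_right_eq_self volume c]
  rw [hm] at h
  rw [h]
  have hs : ⇑(MeasurableEquiv.addRight c) ⁻¹' Ioi (x + c) = Ioi x := by
    ext t
    simp [MeasurableEquiv.addRight]
  rw [hs]
  rfl



lemma hasDerivAt_phi (x : ℝ) : HasDerivAt phi (-(x * phi x)) x := by
  have h1 : HasDerivAt (fun y : ℝ => -y ^ 2 / 2) (-x) x := by
    have := ((hasDerivAt_pow 2 x).neg).div_const 2
    simpa using this.congr_deriv (by ring)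
  have h2 := (h1.exp).const_mul (Real.sqrt (2 * Real.pi))⁻¹
  unfold phi
  exact h2.congr_deriv (by ring)

lemma tendsto_phi_atTop : Tendsto phi atTop (nhds 0) := by
  have h2 : Tendsto (fun x : ℝ => x ^ 2 / 2) atTop atTop :=
    (tendsto_pow_atTop two_ne_zero).atTop_div_const (by norm_num)
  have h1 : Tendsto (fun x : ℝ => -x ^ 2 / 2) atTop atBot := by
    have := tendsto_neg_atTop_atBot.comp h2
    exact this.congr fun x => by simp [Function.comp]; ring
  have h3 := Real.tendsto_exp_atBot.comp h1
  have h4 : Tendsto (fun x : ℝ => Real.exp (-x ^ 2 / 2)) atTop (nhds 0) := h3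
  have h5 := h4.const_mul (Real.sqrt (2 * Real.pi))⁻¹
  rw [mul_zero] at h5
  exact h5

lemma integral_Ioi_mul_phi (x : ℝ) : ∫ s in Set.Ioi x, s * phi s = phi x := by
  have h := integral_Ioi_of_hasDerivAt_of_tendsto' (f := fun s => -phi s)
    (f' := fun s => s * phi s) (a := x) (m := 0)
    (fun y _ => (hasDerivAt_phi y).neg.congr_deriv (by ring))
    (integrable_mul_phi.integrableOn) (by simpa using tendsto_phi_atTop.neg)
  simpa using h




lemma continuous_phi : Continuous phi := by
  unfold phi; fun_prop

lemma Psi_le (x : ℝ) (hx : 0 < x) : Psi x ≤ phi x / x := by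
  set f' : ℝ → ℝ := fun t => phi t * (1 + 1 / t ^ 2) with hf'
  have hderiv : ∀ t ∈ Ici x, HasDerivAt (fun t => -(phi t / t)) (f' t) t := by
    intro t ht
    have h0 : (0:ℝ) < t := lt_of_lt_of_le hx ht
    have h := ((hasDerivAt_phi t).div (hasDerivAt_id t) h0.ne').neg
    refine h.congr_deriv ?_
    simp only [hf', id]
    field_simp
    ring
  have hint : IntegrableOn f' (Ioi x) := by
    apply Integrable.mono' ((integrable_phi.const_mul (1 + 1/x^2)).integrableOn)
    · apply ContinuousOn.aestronglyMeasurable _ measurableSet_Ioi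
      apply continuous_phi.continuousOn.mul
      apply continuousOn_const.add
      apply continuousOn_const.div (continuousOn_pow 2)
      intro s hs
      have h1 : (0:ℝ) < s := hx.trans hs
      positivity
    · rw [ae_restrict_iff' measurableSet_Ioi]
      filter_upwards with t ht
      have htx : x < t := ht
      have h1 : (0:ℝ) < t := hx.trans htx
      have h2 : 1 / t ^ 2 ≤ 1 / x ^ 2 := by
        apply one_div_le_one_div_of_le (by positivity)
        exact pow_le_pow_left₀ hx.le htx.le 2
      have h3 : (0:ℝ) ≤ 1 / t ^ 2 := by positivity
      rw [Real.norm_eq_abs, hf']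
      rw [abs_of_nonneg (by nlinarith [phi_pos t])]
      nlinarith [phi_pos t]
  have htend : Tendsto (fun t => -(phi t / t)) atTop (nhds 0) := by
    have h := (tendsto_phi_atTop.mul tendsto_inv_atTop_zero)
    rw [mul_zero] at h
    have h' := h.neg
    rw [neg_zero] at h'
    exact h'.congr fun t => by ring
  have key := integral_Ioi_of_hasDerivAt_of_tendsto' hderiv hint htend
  have hle : Psi x ≤ ∫ t in Ioi x, f' t := by
    apply setIntegral_mono_on integrable_phi.integrableOn hint measurableSet_Ioi
    intro t ht
    have h1 : (0:ℝ) < t := hx.trans ht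
    have h3 : (0:ℝ) ≤ 1 / t ^ 2 := by positivity
    show phi t ≤ phi t * (1 + 1 / t ^ 2)
    nlinarith [phi_pos t]
  calc Psi x ≤ ∫ t in Ioi x, f' t := hle
    _ = 0 - -(phi x / x) := key
    _ = phi x / x := by ring

lemma le_Psi (x : ℝ) (hx : 0 < x) : x / (1 + x ^ 2) * phi x ≤ Psi x := by
  set f' : ℝ → ℝ := fun t => (t^4 + 2*t^2 - 1) / (1 + t^2)^2 * phi t with hf'
  have habs : ∀ t : ℝ, |f' t| ≤ phi t := by
    intro t
    have h2 : (0:ℝ) < (1+t^2)^2 := by positivity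
    rw [hf', abs_mul, abs_of_nonneg (phi_pos t).le, abs_div,
      abs_of_nonneg (le_of_lt h2)]
    have h1 : |t^4 + 2*t^2 - 1| ≤ (1 + t^2)^2 := by
      rw [abs_le]; constructor <;> nlinarith [sq_nonneg t, sq_nonneg (t^2)]
    have h3 : |t^4+2*t^2-1| / (1+t^2)^2 ≤ 1 := by rw [div_le_one h2]; exact h1
    calc |t^4+2*t^2-1| / (1+t^2)^2 * phi t ≤ 1 * phi t :=
          mul_le_mul_of_nonneg_right h3 (phi_pos t).le
      _ = phi t := one_mul _
  have hderiv : ∀ t ∈ Ici x, HasDerivAt (fun t => -(t / (1 + t^2) * phi t)) (f' t) t := by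
    intro t _
    have hden : (1 + t^2) ≠ 0 := by positivity
    have hq : HasDerivAt (fun t : ℝ => t / (1 + t^2)) ((1*(1+t^2) - t*(2*t))/(1+t^2)^2) t := by
      have h1 : HasDerivAt (fun t : ℝ => 1 + t^2) (2*t) t := by
        have := (hasDerivAt_pow 2 t).const_add 1
        simpa using this
      exact (hasDerivAt_id t).div h1 hden
    have h := (hq.mul (hasDerivAt_phi t)).neg
    refine h.congr_deriv ?_
    rw [hf']
    field_simp
    ring
  have hint : IntegrableOn f' (Ioi x) := by
    apply Integrable.mono' integrable_phi.integrableOn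
    · apply ContinuousOn.aestronglyMeasurable _ measurableSet_Ioi
      apply ContinuousOn.mul _ continuous_phi.continuousOn
      apply ContinuousOn.div (by fun_prop) (by fun_prop)
      intro s _
      positivity
    · filter_upwards with t
      rw [Real.norm_eq_abs]
      exact habs t
  have htend : Tendsto (fun t => -(t / (1 + t^2) * phi t)) atTop (nhds 0) := by
    have hb : ∀ t : ℝ, ‖-(t / (1 + t^2) * phi t)‖ ≤ phi t := by
      intro t
      rw [norm_neg, Real.norm_eq_abs, abs_mul, abs_of_nonneg (phi_pos t).le]
      have h2 : |t / (1+t^2)| ≤ 1 := by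
        rw [abs_div, abs_of_nonneg (by positivity : (0:ℝ) ≤ 1 + t^2), div_le_one (by positivity)]
        cases' abs_cases t with h h <;> nlinarith [sq_nonneg (t-1), sq_nonneg (t+1)]
      calc |t/(1+t^2)| * phi t ≤ 1 * phi t := mul_le_mul_of_nonneg_right h2 (phi_pos t).le
        _ = phi t := one_mul _
    exact squeeze_zero_norm hb tendsto_phi_atTop
  have key := integral_Ioi_of_hasDerivAt_of_tendsto' hderiv hint htend
  have hle : (∫ t in Ioi x, f' t) ≤ Psi x := by
    apply setIntegral_mono_on hint integrable_phi.integrableOn measurableSet_Ioi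
    intro t _
    exact (le_abs_self _).trans (habs t)
  calc x / (1 + x^2) * phi x = 0 - -(x / (1+x^2) * phi x) := by ring
    _ = ∫ t in Ioi x, f' t := key.symm
    _ ≤ Psi x := hle

lemma Psi_pos (x : ℝ) (hx : 0 < x) : 0 < Psi x :=
  lt_of_lt_of_le (mul_pos (by positivity) (phi_pos x)) (le_Psi x hx)




lemma phi_add (t c : ℝ) : phi (t + c) = phi t * Real.exp (-(t*c) - c^2/2) := by
  unfold phi
  rw [mul_assoc, ← Real.exp_add]
  congr 1
  ring_nf

lemma abs_exp_sub_one_le' {x w : ℝ} (h : |x| ≤ w) : |Real.exp x - 1| ≤ w * Real.exp w := by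
  have hw : 0 ≤ w := le_trans (abs_nonneg x) h
  have hA : |Real.exp x - 1| ≤ Real.exp |x| - 1 := by
    rcases abs_cases x with ⟨h1, h2⟩ | ⟨h1, h2⟩
    · rw [h1, abs_of_nonneg (by linarith [Real.one_le_exp h2])]
    · rw [h1, abs_of_nonpos (by linarith [Real.exp_le_one_iff.mpr h2.le] : Real.exp x - 1 ≤ 0)]
      have e1 := Real.add_one_le_exp x
      have e2 := Real.add_one_le_exp (-x)
      linarith
  have hB : Real.exp |x| - 1 ≤ Real.exp w - 1 := by
    have := Real.exp_le_exp.mpr h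
    linarith
  have hC : Real.exp w - 1 ≤ w * Real.exp w := by
    have e1 : 1 - w ≤ Real.exp (-w) := by linarith [Real.add_one_le_exp (-w)]
    have e2 : (1 - w) * Real.exp w ≤ Real.exp (-w) * Real.exp w :=
      mul_le_mul_of_nonneg_right e1 (Real.exp_pos w).le
    rw [← Real.exp_add, neg_add_cancel, Real.exp_zero] at e2
    nlinarith [Real.exp_pos w]
  linarith

set_option maxHeartbeats 1600000 in
/-- perturbation bound for the Gaussian survival function. -/
theorem stmt0 (u ε : ℕ → ℝ) (hu : 0 < ⨅ n, u n)
    (hε : Filter.Tendsto ε Filter.atTop (nhds 0)) :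
    ∃ C : ℝ, ∃ N : ℕ, ∀ n ≥ N,
      |Psi (u n + ε n) - Psi (u n) * Real.exp (-(u n * ε n))| ≤
        C * (|ε n| / u n + ε n ^ 2) * (Psi (u n) * Real.exp (-(u n * ε n))) := by
  set m := ⨅ n, u n with hmdef
  have hbdd : BddBelow (Set.range u) := by
    by_contra hb
    have h0 : m = 0 := by rw [hmdef]; exact Real.iInf_of_not_bddBelow hb
    rw [h0] at hu
    exact lt_irrefl 0 hu
  have hum : ∀ n, m ≤ u n := fun n => ciInf_le hbdd n
  have hm0 : 0 < m := hu
  clear_value m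
  clear hu hmdef
  have hmin0 : 0 < min m 1 / 2 := by
    have := lt_min hm0 one_pos
    linarith
  have hsmall : ∀ᶠ n in atTop, |ε n| < min m 1 / 2 := by
    have h := Metric.tendsto_nhds.mp hε (min m 1 / 2) hmin0
    filter_upwards [h] with n hn
    simpa [Real.dist_eq] using hn
  obtain ⟨N, hN⟩ := eventually_atTop.mp hsmall
  refine ⟨12 * (1 / m ^ 2 + 1), N, fun n hn => ?_⟩
  set U := u n with hUdef
  set e := ε n with hedef
  set δ := |e| with hδdef
  have hU : 0 < U := lt_of_lt_of_le hm0 (hum n)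
  have hδm : δ < min m 1 / 2 := hN n hn
  have hδ0 : 0 ≤ δ := abs_nonneg e
  have hδ1 : δ ≤ 1 / 2 := by
    have h1 : min m 1 ≤ 1 := min_le_right _ _
    linarith
  have hδU : 2 * δ ≤ U := by
    have h1 : min m 1 ≤ m := min_le_left _ _
    have h2 := hum n
    rw [hUdef]
    linarith
  set a := U - δ with hadef
  have ha0 : 0 < a := by rw [hadef]; linarith
  have haU : U / 2 ≤ a := by rw [hadef]; linarith
  set K := Real.exp (δ ^ 2 - U * e - U * δ) with hKdef
  set E := Real.exp (-(U * e)) with hEdef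
  have hE0 : 0 < E := Real.exp_pos _
  set G : ℝ → ℝ := fun s => K * ((s - a) * δ + δ ^ 2 / 2) * phi s with hGdef
  clear_value U e δ a K E G
  have hGeq : G = fun s => K * δ * (s * phi s) + K * (δ ^ 2 / 2 - a * δ) * phi s := by
    funext s; rw [hGdef]; ring
  have hG_int : Integrable G := by
    rw [hGeq]
    exact (integrable_mul_phi.const_mul (K * δ)).add
      (integrable_phi.const_mul (K * (δ ^ 2 / 2 - a * δ)))
  have hint1 : IntegrableOn (fun t => phi (t + e)) (Ioi U) :=
    (integrable_phi.comp_add_right e).integrableOn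
  have hint2 : IntegrableOn (fun t => phi t * E) (Ioi U) :=
    (integrable_phi.mul_const E).integrableOn
  have hintG : IntegrableOn (fun t => G (t + -δ)) (Ioi U) :=
    (hG_int.comp_add_right (-δ)).integrableOn
  -- identity for the difference
  have hI1 : Psi (U + e) = ∫ t in Ioi U, phi (t + e) := (integral_Ioi_shift phi U e).symm
  have hI2 : Psi U * E = ∫ t in Ioi U, phi t * E := (integral_mul_const E phi).symm
  have hD : Psi (U + e) - Psi U * E = ∫ t in Ioi U, (phi (t + e) - phi t * E) := by
    rw [hI1, hI2, integral_sub hint1 hint2]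
  -- pointwise bound
  have hptw : ∀ t ∈ Ioi U, |phi (t + e) - phi t * E| ≤ G (t + -δ) := by
    intro t ht
    have htU : U < t := ht
    set w := (t - U) * δ + δ ^ 2 / 2 with hwdef
    have hx : |(-((t - U) * e) - e ^ 2 / 2)| ≤ w := by
      have h1 : |(-((t - U) * e) - e ^ 2 / 2)| ≤ |(t - U) * e| + |e ^ 2 / 2| := by
        calc |(-((t - U) * e) - e ^ 2 / 2)| ≤ |(-((t - U) * e))| + |e ^ 2 / 2| := abs_sub _ _
          _ = |(t - U) * e| + |e ^ 2 / 2| := by rw [abs_neg]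
      have h2 : |(t - U) * e| = (t - U) * δ := by
        rw [hδdef, abs_mul, abs_of_nonneg (by linarith : (0:ℝ) ≤ t - U)]
      have h3 : |e ^ 2 / 2| = δ ^ 2 / 2 := by
        rw [hδdef, sq_abs, abs_of_nonneg (by positivity : (0:ℝ) ≤ e ^ 2 / 2)]
      rw [h2, h3] at h1
      exact h1
    have hsplit : phi (t + e) = phi t * E * Real.exp (-((t - U) * e) - e ^ 2 / 2) := by
      rw [phi_add, hEdef, mul_assoc, ← Real.exp_add]
      congr 1
      ring
    have hGval : G (t + -δ) = phi t * E * (w * Real.exp w) := by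
      rw [hGdef]
      simp only
      rw [phi_add, hKdef, hEdef, hwdef]
      rw [show t + -δ - a = t - U by rw [hadef]; ring]
      rw [show -(t * -δ) - (-δ) ^ 2 / 2 = t * δ - δ ^ 2 / 2 by ring]
      rw [show Real.exp (δ ^ 2 - U * e - U * δ) * ((t - U) * δ + δ ^ 2 / 2) *
            (phi t * Real.exp (t * δ - δ ^ 2 / 2)) =
          phi t * ((t - U) * δ + δ ^ 2 / 2) *
            (Real.exp (δ ^ 2 - U * e - U * δ) * Real.exp (t * δ - δ ^ 2 / 2)) by ring]
      rw [← Real.exp_add]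
      rw [show δ ^ 2 - U * e - U * δ + (t * δ - δ ^ 2 / 2) = -(U * e) + ((t - U) * δ + δ ^ 2 / 2) by ring]
      rw [Real.exp_add]
      ring
    calc |phi (t + e) - phi t * E|
        = phi t * E * |Real.exp (-((t - U) * e) - e ^ 2 / 2) - 1| := by
          rw [hsplit, show phi t * E * Real.exp (-((t - U) * e) - e ^ 2 / 2) - phi t * E =
            phi t * E * (Real.exp (-((t - U) * e) - e ^ 2 / 2) - 1) by ring,
            abs_mul, abs_of_nonneg (mul_pos (phi_pos t) hE0).le]
      _ ≤ phi t * E * (w * Real.exp w) := by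
          exact mul_le_mul_of_nonneg_left (abs_exp_sub_one_le' hx) (mul_pos (phi_pos t) hE0).le
      _ = G (t + -δ) := hGval.symm
  -- integral bound
  have hDb : |Psi (U + e) - Psi U * E| ≤ ∫ t in Ioi U, G (t + -δ) := by
    rw [hD]
    have h := norm_integral_le_of_norm_le hintG (by
      rw [ae_restrict_iff' measurableSet_Ioi]
      filter_upwards with t ht
      rw [Real.norm_eq_abs]
      exact hptw t ht)
    simpa using h
  -- evaluate the integral
  have hval : (∫ t in Ioi U, G (t + -δ)) = K * δ * phi a + K * (δ ^ 2 / 2 - a * δ) * Psi a := by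
    rw [integral_Ioi_shift G U (-δ), show U + -δ = a by rw [hadef]; ring, hGeq]
    rw [integral_add ((integrable_mul_phi.const_mul (K * δ)).integrableOn)
      ((integrable_phi.const_mul (K * (δ ^ 2 / 2 - a * δ))).integrableOn)]
    rw [integral_const_mul, integral_const_mul, integral_Ioi_mul_phi]
    rfl
  -- reduce to numeric bound
  set B := δ * (phi a - a * Psi a) + δ ^ 2 / 2 * Psi a with hBdef
  clear_value B
  have hVB : K * δ * phi a + K * (δ ^ 2 / 2 - a * δ) * Psi a = K * B := by rw [hBdef]; ring
  have h1 : |Psi (U + e) - Psi U * E| ≤ K * B := by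
    rw [← hVB, ← hval]
    exact hDb
  clear hval hDb hptw hD hI1 hI2 hintG hint1 hint2 hG_int hGeq hGdef
  clear hsmall hN hε
  -- Mills-type facts
  have hPsia_le : a * Psi a ≤ phi a := by
    have h := Psi_le a ha0
    rw [le_div_iff₀ ha0] at h
    linarith [mul_comm (Psi a) a]
  have hmills_a : a * phi a ≤ Psi a * (1 + a ^ 2) := by
    have h := le_Psi a ha0
    rw [div_mul_eq_mul_div, div_le_iff₀ (by positivity : (0:ℝ) < 1 + a ^ 2)] at h
    linarith
  have hb1 : phi a - a * Psi a ≤ phi a / a ^ 2 := by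
    rw [le_div_iff₀ (pow_pos ha0 2)]
    nlinarith [mul_le_mul_of_nonneg_left hmills_a ha0.le]
  have hPsia : Psi a ≤ phi a / a := Psi_le a ha0
  have hphia : phi a ≤ phi U * Real.exp (U * δ) := by
    have h1 : a = U + -δ := by rw [hadef]; ring
    rw [h1, phi_add]
    have h2 : Real.exp (-(U * -δ) - (-δ) ^ 2 / 2) ≤ Real.exp (U * δ) :=
      Real.exp_le_exp.mpr (by nlinarith [sq_nonneg δ])
    exact mul_le_mul_of_nonneg_left h2 (phi_pos U).le
  have hmills_U : U * phi U ≤ Psi U * (1 + U ^ 2) := by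
    have h := le_Psi U hU
    rw [div_mul_eq_mul_div, div_le_iff₀ (by positivity : (0:ℝ) < 1 + U ^ 2)] at h
    linarith
  have hKle : K ≤ 3 * E * Real.exp (-(U * δ)) := by
    have h3 : Real.exp (δ ^ 2) ≤ 3 := by
      have h1 : δ ^ 2 ≤ 1 := by nlinarith
      calc Real.exp (δ ^ 2) ≤ Real.exp 1 := Real.exp_le_exp.mpr h1
        _ ≤ 3 := Real.exp_one_lt_d9.le.trans (by norm_num)
    have h1 : Real.exp (δ ^ 2) * E * Real.exp (-(U * δ)) = K := by
      rw [hKdef, hEdef, ← Real.exp_add, ← Real.exp_add]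
      exact congrArg Real.exp (by ring)
    rw [← h1]
    exact mul_le_mul_of_nonneg_right (mul_le_mul_of_nonneg_right h3 hE0.le)
      (Real.exp_pos (-(U * δ))).le
  have hB0 : 0 ≤ B := by
    rw [hBdef]
    have := Psi_pos a ha0
    nlinarith
  have hBle : B ≤ phi U * Real.exp (U * δ) * (δ / a ^ 2 + δ ^ 2 / (2 * a)) := by
    have h1 : B ≤ δ * (phi a / a ^ 2) + δ ^ 2 / 2 * (phi a / a) := by
      rw [hBdef]
      exact add_le_add (mul_le_mul_of_nonneg_left hb1 hδ0)
        (mul_le_mul_of_nonneg_left hPsia (by positivity : (0:ℝ) ≤ δ ^ 2 / 2))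
    have h2 : δ * (phi a / a ^ 2) + δ ^ 2 / 2 * (phi a / a) = phi a * (δ / a ^ 2 + δ ^ 2 / (2 * a)) := by
      field_simp
    have hz : (0:ℝ) ≤ δ / a ^ 2 + δ ^ 2 / (2 * a) :=
      add_nonneg (div_nonneg hδ0 (sq_nonneg a)) (div_nonneg (sq_nonneg δ) (by linarith))
    have h3 : phi a * (δ / a ^ 2 + δ ^ 2 / (2 * a)) ≤
        phi U * Real.exp (U * δ) * (δ / a ^ 2 + δ ^ 2 / (2 * a)) :=
      mul_le_mul_of_nonneg_right hphia hz
    linarith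
  have hfrac : δ / a ^ 2 + δ ^ 2 / (2 * a) ≤ 4 * δ / U ^ 2 + δ ^ 2 / U := by
    have h1 : δ / a ^ 2 ≤ 4 * δ / U ^ 2 := by
      rw [div_le_div_iff₀ (pow_pos ha0 2) (pow_pos hU 2)]
      have hUa : 0 ≤ 4 * a ^ 2 - U ^ 2 := by
        nlinarith [mul_nonneg (sub_nonneg.mpr haU) (by linarith : (0:ℝ) ≤ a + U / 2)]
      nlinarith [mul_nonneg hδ0 hUa]
    have h2 : δ ^ 2 / (2 * a) ≤ δ ^ 2 / U := by
      rw [div_le_div_iff₀ (by linarith : (0:ℝ) < 2 * a) hU]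
      nlinarith [mul_nonneg (sq_nonneg δ) (by linarith : (0:ℝ) ≤ 2 * a - U)]
    linarith
  -- chain to W
  have hcanc : Real.exp (-(U * δ)) * Real.exp (U * δ) = 1 := by
    rw [← Real.exp_add]; simp
  have hchain : K * B ≤ 3 * E * phi U * (4 * δ / U ^ 2 + δ ^ 2 / U) := by
    have s1 : K * B ≤ (3 * E * Real.exp (-(U * δ))) * B := mul_le_mul_of_nonneg_right hKle hB0
    have s2 : (3 * E * Real.exp (-(U * δ))) * B ≤
        (3 * E * Real.exp (-(U * δ))) * (phi U * Real.exp (U * δ) * (δ / a ^ 2 + δ ^ 2 / (2 * a))) := by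
      exact mul_le_mul_of_nonneg_left hBle
        (by nlinarith [hE0, Real.exp_pos (-(U * δ))] : (0:ℝ) ≤ 3 * E * Real.exp (-(U * δ)))
    have s3 : (3 * E * Real.exp (-(U * δ))) * (phi U * Real.exp (U * δ) * (δ / a ^ 2 + δ ^ 2 / (2 * a)))
        = 3 * E * phi U * (δ / a ^ 2 + δ ^ 2 / (2 * a)) := by
      calc (3 * E * Real.exp (-(U * δ))) * (phi U * Real.exp (U * δ) * (δ / a ^ 2 + δ ^ 2 / (2 * a)))
          = 3 * E * phi U * (δ / a ^ 2 + δ ^ 2 / (2 * a)) * (Real.exp (-(U * δ)) * Real.exp (U * δ)) := by ring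
        _ = 3 * E * phi U * (δ / a ^ 2 + δ ^ 2 / (2 * a)) := by rw [hcanc, mul_one]
    have s4 : 3 * E * phi U * (δ / a ^ 2 + δ ^ 2 / (2 * a)) ≤
        3 * E * phi U * (4 * δ / U ^ 2 + δ ^ 2 / U) := by
      exact mul_le_mul_of_nonneg_left hfrac
        (by nlinarith [hE0, phi_pos U] : (0:ℝ) ≤ 3 * E * phi U)
    linarith
  -- core polynomial inequality
  have hm2U : m ^ 2 ≤ U ^ 2 := by nlinarith [hum n, hm0]
  have hPU : 0 < Psi U := Psi_pos U hU
  have hpoly : 3 * phi U * (4 * δ + δ ^ 2 * U) * m ^ 2 * U ≤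
      12 * (1 + m ^ 2) * (δ * U + δ ^ 2 * U ^ 2) * Psi U * U := by
    have t1 := mul_le_mul_of_nonneg_left hmills_U
      (mul_nonneg (mul_nonneg (by norm_num : (0:ℝ) ≤ 12) hδ0) (sq_nonneg m))
    have t2 := mul_le_mul_of_nonneg_left hmills_U
      (mul_nonneg (mul_nonneg (mul_nonneg (by norm_num : (0:ℝ) ≤ 3) (sq_nonneg δ)) hU.le) (sq_nonneg m))
    have q1 : (0:ℝ) ≤ δ * Psi U * (U ^ 2 - m ^ 2) :=
      mul_nonneg (mul_nonneg hδ0 hPU.le) (sub_nonneg.mpr hm2U)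
    have q3 : (0:ℝ) ≤ δ ^ 2 * U * Psi U * (4 * U ^ 2 - m ^ 2) :=
      mul_nonneg (mul_nonneg (mul_nonneg (sq_nonneg δ) hU.le) hPU.le)
        (by nlinarith [hm2U, sq_nonneg U] : (0:ℝ) ≤ 4 * U ^ 2 - m ^ 2)
    have q4 : (0:ℝ) ≤ δ ^ 2 * U ^ 3 * m ^ 2 * Psi U :=
      mul_nonneg (mul_nonneg (mul_nonneg (sq_nonneg δ) (pow_nonneg hU.le 3)) (sq_nonneg m)) hPU.le
    nlinarith [t1, t2, q1, q3, q4]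
  have hcore : 3 * phi U * (4 * δ / U ^ 2 + δ ^ 2 / U) ≤
      12 * (1 / m ^ 2 + 1) * (δ / U + δ ^ 2) * Psi U := by
    have eL : 3 * phi U * (4 * δ / U ^ 2 + δ ^ 2 / U) =
        (3 * phi U * (4 * δ + δ ^ 2 * U) * m ^ 2 * U) / (U ^ 3 * m ^ 2) := by
      field_simp [hU.ne', hm0.ne']
    have eR : 12 * (1 / m ^ 2 + 1) * (δ / U + δ ^ 2) * Psi U =
        (12 * (1 + m ^ 2) * (δ * U + δ ^ 2 * U ^ 2) * Psi U * U) / (U ^ 3 * m ^ 2) := by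
      field_simp [hU.ne', hm0.ne']
    rw [eL, eR]
    exact (div_le_div_iff_of_pos_right (mul_pos (pow_pos hU 3) (pow_pos hm0 2))).mpr hpoly
  -- assemble
  have hfin : |Psi (U + e) - Psi U * E| ≤ 12 * (1 / m ^ 2 + 1) * (δ / U + δ ^ 2) * (Psi U * E) := by
    have h2 := mul_le_mul_of_nonneg_left hcore hE0.le
    calc |Psi (U + e) - Psi U * E| ≤ K * B := h1
      _ ≤ 3 * E * phi U * (4 * δ / U ^ 2 + δ ^ 2 / U) := hchain
      _ = E * (3 * phi U * (4 * δ / U ^ 2 + δ ^ 2 / U)) := by ring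
      _ ≤ E * (12 * (1 / m ^ 2 + 1) * (δ / U + δ ^ 2) * Psi U) := h2
      _ = 12 * (1 / m ^ 2 + 1) * (δ / U + δ ^ 2) * (Psi U * E) := by ring
  have hsq : δ ^ 2 = e ^ 2 := by rw [hδdef]; exact sq_abs e
  rw [← hsq]
  exact hfin
end

section
/- Fix an integer d ≥ 1 and constants 0 < σ₁² ≤ C₁ < ∞. There exists a constant C < ∞, depending only on d, σ₁, and C₁, with the following property: for every symmetric positive definite d×d matrix M with smallest eigenvalue λ := λ_min(M), every symmetric d×d matrix Λ with σ₁²·I ⪯ Λ ⪯ C₁·I, and every real c with 0 ≤ c ≤ λ, one has |√(det(M + cΛ)/det(M)) · exp(−(c/2)·tr((M + cΛ)^{-1} Λ)) − 1| ≤ C·c²/λ². -/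
open Matrix RealInnerProductSpace


lemma scalar_bounds (t : ℝ) (ht : 0 ≤ t) :
    0 ≤ Real.log (1 + t) - t / (1 + t) ∧ Real.log (1 + t) - t / (1 + t) ≤ t ^ 2 := by
  have h1 : (0:ℝ) < 1 + t := by linarith
  have hl1 : Real.log (1 + t) ≤ t := by
    have := Real.log_le_sub_one_of_pos h1; linarith
  have hl2 : 1 - (1 + t)⁻¹ ≤ Real.log (1 + t) := by
    have := Real.log_le_sub_one_of_pos (inv_pos.mpr h1)
    rw [Real.log_inv] at this; linarith
  have hfrac : t / (1 + t) = 1 - (1 + t)⁻¹ := by field_simp; ring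
  constructor
  · rw [hfrac]; linarith
  · have h2 : t - t / (1 + t) = t ^ 2 / (1 + t) := by field_simp; ring
    have h3 : t ^ 2 / (1 + t) ≤ t ^ 2 := by
      apply div_le_self (sq_nonneg t); linarith
    linarith

lemma smul_posSemidef {d : ℕ} {A : Matrix (Fin d) (Fin d) ℝ} (hA : A.PosSemidef)
    {c : ℝ} (hc : 0 ≤ c) : (c • A).PosSemidef := by
  refine .of_dotProduct_mulVec_nonneg ?_ (fun x => ?_)
  · unfold Matrix.IsHermitian
    rw [conjTranspose_smul, hA.1.eq]
    simp
  · rw [smul_mulVec, dotProduct_smul, smul_eq_mul]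
    exact mul_nonneg hc (hA.dotProduct_mulVec_nonneg x)

lemma eig_le_of_posSemidef {d : ℕ} {A : Matrix (Fin d) (Fin d) ℝ} (hA : A.IsHermitian) {t : ℝ}
    (h : (t • (1 : Matrix (Fin d) (Fin d) ℝ) - A).PosSemidef) (i : Fin d) :
    hA.eigenvalues i ≤ t := by
  set v : Fin d → ℝ := ⇑(hA.eigenvectorBasis i) with hv
  have hAv : A *ᵥ v = hA.eigenvalues i • v := hA.mulVec_eigenvectorBasis i
  have hvv : v ⬝ᵥ v = 1 := by
    have hnorm : ‖hA.eigenvectorBasis i‖ = 1 := hA.eigenvectorBasis.orthonormal.1 i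
    have h1 : (inner ℝ (hA.eigenvectorBasis i) (hA.eigenvectorBasis i) : ℝ) = v ⬝ᵥ v := by
      rw [EuclideanSpace.inner_eq_star_dotProduct]
      rfl
    have h2 : (inner ℝ (hA.eigenvectorBasis i) (hA.eigenvectorBasis i) : ℝ) = 1 := by
      rw [real_inner_self_eq_norm_sq, hnorm]; norm_num
    rw [← h1, h2]
  have h2 := h.dotProduct_mulVec_nonneg v
  have h3 : star v = v := by simp
  rw [sub_mulVec, smul_mulVec, one_mulVec, hAv, h3, dotProduct_sub, dotProduct_smul,
    dotProduct_smul, hvv] at h2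
  simp only [smul_eq_mul, mul_one] at h2
  linarith

lemma sub_iInf_posSemidef {d : ℕ} [Nonempty (Fin d)] {M : Matrix (Fin d) (Fin d) ℝ}
    (hM : M.IsHermitian) :
    (M - (⨅ i, hM.eigenvalues i) • (1 : Matrix (Fin d) (Fin d) ℝ)).PosSemidef := by
  set μ := ⨅ i, hM.eigenvalues i with hμdef
  have hμ : ∀ i, μ ≤ hM.eigenvalues i := fun i => ciInf_le (Finite.bddBelow_range _) i
  set V : Matrix (Fin d) (Fin d) ℝ := (hM.eigenvectorUnitary : Matrix (Fin d) (Fin d) ℝ) with hVdef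
  have hVV : V * star V = 1 := Matrix.mem_unitaryGroup_iff.mp hM.eigenvectorUnitary.2
  have key : M - μ • 1 = V * diagonal (fun i => hM.eigenvalues i - μ) * star V := by
    have hspec : M = V * diagonal hM.eigenvalues * star V := by
      have := hM.spectral_theorem
      rwa [RCLike.ofReal_real_eq_id, Function.id_comp] at this
    have hdd : diagonal (fun i => hM.eigenvalues i - μ)
        = diagonal hM.eigenvalues - μ • (1 : Matrix (Fin d) (Fin d) ℝ) := by
      ext i j
      rcases eq_or_ne i j with rfl | hij
      · simp [Matrix.one_apply_eq]
      · simp [Matrix.diagonal_apply_ne _ hij, Matrix.one_apply_ne hij]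
    rw [hdd, Matrix.mul_sub, Matrix.sub_mul, ← hspec]
    congr 1
    rw [Matrix.mul_smul, Matrix.smul_mul, mul_one, hVV]
  rw [key]
  exact (Matrix.PosSemidef.diagonal (fun i => sub_nonneg.mpr (hμ i))).mul_mul_conjTranspose_same V

/-- The smallest eigenvalue of a Hermitian (real symmetric) matrix. -/
noncomputable def minEig {d : ℕ} (M : Matrix (Fin d) (Fin d) ℝ) (hM : M.IsHermitian) : ℝ :=
  ⨅ i, hM.eigenvalues i

/-- second-order accuracy of the determinant/trace correction: for `M` positive
definite with smallest eigenvalue `λ`, `σ₁²·I ⪯ Λ ⪯ C₁·I` symmetric, and `0 ≤ c ≤ λ`,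
`|√(det(M + cΛ)/det M)·exp(−(c/2)·tr((M + cΛ)⁻¹Λ)) − 1| ≤ C·c²/λ²`. -/
theorem stmt7 (d : ℕ) (hd : 1 ≤ d) (σ1sq C₁ : ℝ) (hσ : 0 < σ1sq) (hC₁ : σ1sq ≤ C₁) :
    ∃ C : ℝ, ∀ (M : Matrix (Fin d) (Fin d) ℝ) (hM : M.PosDef)
      (Λ : Matrix (Fin d) (Fin d) ℝ), Λ.IsHermitian →
      (Λ - σ1sq • (1 : Matrix (Fin d) (Fin d) ℝ)).PosSemidef →
      (C₁ • (1 : Matrix (Fin d) (Fin d) ℝ) - Λ).PosSemidef →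
      ∀ c : ℝ, 0 ≤ c → c ≤ minEig M hM.isHermitian →
        |Real.sqrt ((M + c • Λ).det / M.det) *
            Real.exp (-(c / 2) * ((M + c • Λ)⁻¹ * Λ).trace) - 1| ≤
          C * c ^ 2 / (minEig M hM.isHermitian) ^ 2 := by
  have hC₁pos : 0 < C₁ := lt_of_lt_of_le hσ hC₁
  refine ⟨(d * C₁ ^ 2 / 2) * Real.exp (d * C₁ ^ 2 / 2), ?_⟩
  intro M hM Λ hΛ hΛlo hΛhi c hc0 hcl
  have hne : Nonempty (Fin d) := ⟨⟨0, hd⟩⟩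
  set lam := minEig M hM.isHermitian with hlamdef
  have hlam_le : ∀ i, lam ≤ hM.isHermitian.eigenvalues i :=
    fun i => ciInf_le (Finite.bddBelow_range _) i
  have hlam_pos : 0 < lam := by
    obtain ⟨i0, hi0⟩ := Finite.exists_min hM.isHermitian.eigenvalues
    have : lam = hM.isHermitian.eigenvalues i0 :=
      le_antisymm (hlam_le i0) (le_ciInf hi0)
    rw [this]
    exact hM.eigenvalues_pos i0
  -- square root of M
  set S := (open scoped MatrixOrder in CFC.sqrt M) with hSdef
  have hSpsd : S.PosSemidef := by open scoped MatrixOrder in exact (CFC.sqrt_nonneg M).posSemidef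
  have hSherm : S.IsHermitian := hSpsd.1
  have hSS : S * S = M := by open scoped MatrixOrder in exact CFC.sqrt_mul_sqrt_self M hM.posSemidef.nonneg
  have hdetM : 0 < M.det := hM.det_pos
  have hdetS : IsUnit S.det := by
    rw [isUnit_iff_ne_zero]
    intro h
    rw [← hSS, det_mul, h, mul_zero] at hdetM
    exact lt_irrefl _ hdetM
  have hS_inv : S * S⁻¹ = 1 := mul_nonsing_inv S hdetS
  have hS_inv' : S⁻¹ * S = 1 := nonsing_inv_mul S hdetS
  have hSinv_herm : S⁻¹.IsHermitian := hSherm.inv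
  clear_value S
  -- the conjugated matrix A
  set A := S⁻¹ * Λ * S⁻¹ with hAdef
  have hAherm : A.IsHermitian := by
    unfold Matrix.IsHermitian
    rw [hAdef, conjTranspose_mul, conjTranspose_mul, hSinv_herm.eq, hΛ.eq, Matrix.mul_assoc]
  have hΛpsd : Λ.PosSemidef := by
    have h1 : (σ1sq • (1 : Matrix (Fin d) (Fin d) ℝ)).PosSemidef :=
      smul_posSemidef Matrix.PosSemidef.one hσ.le
    have h2 := hΛlo.add h1
    rwa [sub_add_cancel] at h2
  have hApsd : A.PosSemidef := by
    have h2 := hΛpsd.conjTranspose_mul_mul_same S⁻¹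
    rwa [hSinv_herm.eq] at h2
  set a := hAherm.eigenvalues with hadef
  have ha0 : ∀ i, 0 ≤ a i := hApsd.eigenvalues_nonneg
  -- eigenvalue upper bound
  have hMl : (M - lam • 1).PosSemidef := sub_iInf_posSemidef hM.isHermitian
  have hSMS : S⁻¹ * M * S⁻¹ = 1 := by
    rw [← hSS, ← Matrix.mul_assoc, hS_inv', Matrix.one_mul, hS_inv]
  have hub : ((C₁ / lam) • (1 : Matrix (Fin d) (Fin d) ℝ) - A).PosSemidef := by
    have hinner : (C₁ / lam) • (M - lam • 1) + (C₁ • (1 : Matrix (Fin d) (Fin d) ℝ) - Λ)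
        = (C₁ / lam) • M - Λ := by
      rw [smul_sub, smul_smul, div_mul_cancel₀ _ (ne_of_gt hlam_pos)]
      abel
    have hpsd : ((C₁ / lam) • M - Λ).PosSemidef := by
      rw [← hinner]
      exact (smul_posSemidef hMl (by positivity)).add hΛhi
    have hexp : (C₁ / lam) • (1 : Matrix (Fin d) (Fin d) ℝ) - A
        = S⁻¹ * ((C₁ / lam) • M - Λ) * S⁻¹ := by
      rw [Matrix.mul_sub, Matrix.sub_mul, hAdef, Matrix.mul_smul, Matrix.smul_mul, hSMS]
    rw [hexp]
    have h2 := hpsd.conjTranspose_mul_mul_same S⁻¹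
    rwa [hSinv_herm.eq] at h2
  have ha_le : ∀ i, a i ≤ C₁ / lam := fun i => eig_le_of_posSemidef hAherm hub i
  -- the matrix B = 1 + c A and its spectral form
  set B := (1 : Matrix (Fin d) (Fin d) ℝ) + c • A with hBdef
  have hMc : M + c • Λ = S * B * S := by
    rw [hBdef, Matrix.mul_add, Matrix.add_mul, Matrix.mul_one, hSS]
    congr 1
    rw [Matrix.mul_smul, Matrix.smul_mul]
    congr 1
    rw [hAdef, ← Matrix.mul_assoc, ← Matrix.mul_assoc, hS_inv, Matrix.one_mul,
      Matrix.mul_assoc, hS_inv', Matrix.mul_one]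
  set V : Matrix (Fin d) (Fin d) ℝ := (hAherm.eigenvectorUnitary : Matrix (Fin d) (Fin d) ℝ)
    with hVdef
  have hVV : V * star V = 1 := Matrix.mem_unitaryGroup_iff.mp hAherm.eigenvectorUnitary.2
  have hVV' : star V * V = 1 := Matrix.mem_unitaryGroup_iff'.mp hAherm.eigenvectorUnitary.2
  have hspecA : A = V * diagonal a * star V := by
    have h := hAherm.spectral_theorem
    rwa [RCLike.ofReal_real_eq_id, Function.id_comp] at h
  clear_value A a V
  have hp : ∀ i, 0 < 1 + c * a i :=
    fun i => add_pos_of_pos_of_nonneg one_pos (mul_nonneg hc0 (ha0 i))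
  set p : Fin d → ℝ := fun i => 1 + c * a i with hpdef
  have hppos : ∀ i, 0 < p i := hp
  have hB : B = V * diagonal p * star V := by
    have hdp : diagonal p = 1 + c • diagonal a := by
      ext i j
      rcases eq_or_ne i j with rfl | hij
      · simp [hpdef, Matrix.one_apply_eq]
      · simp [Matrix.diagonal_apply_ne _ hij, Matrix.one_apply_ne hij]
    rw [hdp, Matrix.mul_add, Matrix.add_mul, Matrix.mul_one, hVV, hBdef]
    congr 1
    rw [Matrix.mul_smul, Matrix.smul_mul, hspecA]
  have hconj : ∀ X Y : Matrix (Fin d) (Fin d) ℝ,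
      (V * X * star V) * (V * Y * star V) = V * (X * Y) * star V := by
    intro X Y
    rw [Matrix.mul_assoc (V * X) (star V) ((V * Y) * star V),
      ← Matrix.mul_assoc (star V) (V * Y) (star V), ← Matrix.mul_assoc (star V) V Y,
      hVV', Matrix.one_mul, ← Matrix.mul_assoc (V * X) Y (star V), Matrix.mul_assoc V X Y]
  have htr : ∀ X : Matrix (Fin d) (Fin d) ℝ, (V * X * star V).trace = X.trace := by
    intro X
    rw [Matrix.trace_mul_comm, ← Matrix.mul_assoc, hVV', Matrix.one_mul]
  have hdetB : B.det = ∏ i, p i := by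
    rw [hB, det_mul, det_mul, det_diagonal, mul_right_comm, ← det_mul, hVV, det_one, one_mul]
  have hdet_ratio : (M + c • Λ).det / M.det = ∏ i, p i := by
    have hMdet' : M.det = S.det * S.det := by rw [← hSS, det_mul]
    have hSne : S.det ≠ 0 := hdetS.ne_zero
    rw [hMc, det_mul, det_mul, ← hdetB, hMdet', div_eq_iff (mul_ne_zero hSne hSne)]
    ring
  -- inverse and trace
  have hBinv : B⁻¹ = V * diagonal (fun i => (p i)⁻¹) * star V := by
    apply Matrix.inv_eq_right_inv
    have hone : (fun i => p i * (p i)⁻¹) = (fun _ : Fin d => (1 : ℝ)) :=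
      funext fun i => mul_inv_cancel₀ (hppos i).ne'
    rw [hB, hconj, diagonal_mul_diagonal, hone, diagonal_one, Matrix.mul_one, hVV]
  have htrace : ((M + c • Λ)⁻¹ * Λ).trace = ∑ i, (p i)⁻¹ * a i := by
    have hMcinv : (M + c • Λ)⁻¹ = S⁻¹ * (B⁻¹ * S⁻¹) := by
      rw [hMc, Matrix.mul_inv_rev, Matrix.mul_inv_rev]
    have etr1 : ((S⁻¹ * (B⁻¹ * S⁻¹)) * Λ).trace = (B⁻¹ * A).trace := by
      rw [Matrix.mul_assoc, Matrix.trace_mul_comm]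
      congr 1
      rw [hAdef, Matrix.mul_assoc, Matrix.mul_assoc, Matrix.mul_assoc]
    have etr2 : (B⁻¹ * A).trace = ∑ i, (p i)⁻¹ * a i := by
      have eBA : B⁻¹ * A = V * (diagonal (fun i => (p i)⁻¹) * diagonal a) * star V := by
        rw [hBinv, hspecA, hconj]
      rw [eBA, htr, diagonal_mul_diagonal, trace_diagonal]
    rw [hMcinv, etr1, etr2]
  -- rewrite the goal in scalar form
  rw [hdet_ratio, htrace]
  set T : ℝ := ∑ i, (Real.log (p i) - c * a i / p i) / 2 with hTdef
  have hprodpos : 0 < ∏ i, p i := Finset.prod_pos (fun i _ => hppos i)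
  have hsqrt : Real.sqrt (∏ i, p i) = Real.exp ((∑ i, Real.log (p i)) / 2) := by
    have hlogprod : ∑ i, Real.log (p i) = Real.log (∏ i, p i) :=
      (Real.log_prod (fun i _ => (hppos i).ne')).symm
    have hsq : Real.exp ((∑ i, Real.log (p i)) / 2) ^ 2 = ∏ i, p i := by
      rw [← Real.exp_nat_mul]
      push_cast
      rw [mul_div_cancel₀ _ (two_ne_zero), hlogprod, Real.exp_log hprodpos]
    rw [← hsq, Real.sqrt_sq (Real.exp_nonneg _)]
  have hcomb : Real.sqrt (∏ i, p i) * Real.exp (-(c / 2) * ∑ i, (p i)⁻¹ * a i)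
      = Real.exp T := by
    rw [hsqrt, ← Real.exp_add]
    congr 1
    have e1 : T = (∑ i, Real.log (p i)) / 2 - (∑ i, c * a i / p i) / 2 := by
      rw [hTdef, ← Finset.sum_div, Finset.sum_sub_distrib, sub_div]
    have e2 : ∑ i, c * a i / p i = c * ∑ i, (p i)⁻¹ * a i := by
      rw [Finset.mul_sum]
      exact Finset.sum_congr rfl (fun i _ => by rw [div_eq_mul_inv]; ring)
    rw [e1, e2]
    ring
  rw [hcomb]
  -- bounds on T
  have hterm : ∀ i, 0 ≤ (Real.log (p i) - c * a i / p i) / 2 ∧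
      (Real.log (p i) - c * a i / p i) / 2 ≤ (c * a i) ^ 2 / 2 := by
    intro i
    have h := scalar_bounds (c * a i) (mul_nonneg hc0 (ha0 i))
    constructor
    · have := h.1
      simp only [hpdef]
      linarith
    · have := h.2
      simp only [hpdef]
      linarith
  have hT0 : 0 ≤ T := Finset.sum_nonneg (fun i _ => (hterm i).1)
  have hcal : ∀ i, (c * a i) ^ 2 / 2 ≤ C₁ ^ 2 / 2 * (c ^ 2 / lam ^ 2) := by
    intro i
    have h1 : 0 ≤ c * a i := mul_nonneg hc0 (ha0 i)
    have h2 : c * a i ≤ c * (C₁ / lam) := mul_le_mul_of_nonneg_left (ha_le i) hc0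
    have h3 : (c * a i) ^ 2 ≤ (c * (C₁ / lam)) ^ 2 := by
      apply pow_le_pow_left₀ h1 h2
    have h4 : (c * (C₁ / lam)) ^ 2 = C₁ ^ 2 * (c ^ 2 / lam ^ 2) := by
      field_simp
    rw [h4] at h3
    linarith
  have hTle : T ≤ (d * C₁ ^ 2 / 2) * (c ^ 2 / lam ^ 2) := by
    calc T ≤ ∑ _i : Fin d, C₁ ^ 2 / 2 * (c ^ 2 / lam ^ 2) :=
          Finset.sum_le_sum (fun i _ => le_trans (hterm i).2 (hcal i))
      _ = d * (C₁ ^ 2 / 2 * (c ^ 2 / lam ^ 2)) := by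
          rw [Finset.sum_const, Finset.card_univ, Fintype.card_fin, nsmul_eq_mul]
      _ = (d * C₁ ^ 2 / 2) * (c ^ 2 / lam ^ 2) := by ring
  have hclam : c ^ 2 / lam ^ 2 ≤ 1 := by
    rw [div_le_one (pow_pos hlam_pos 2)]
    exact pow_le_pow_left₀ hc0 hcl 2
  have hTmax : T ≤ d * C₁ ^ 2 / 2 := by
    have hd0 : (0:ℝ) ≤ d * C₁ ^ 2 / 2 := by positivity
    nlinarith
  have habs : |Real.exp T - 1| = Real.exp T - 1 :=
    abs_of_nonneg (by linarith [Real.one_le_exp hT0])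
  rw [habs]
  have key : Real.exp T - 1 ≤ T * Real.exp T := by
    have h := Real.add_one_le_exp (-T)
    have h2 : Real.exp (-T) * Real.exp T = 1 := by
      rw [← Real.exp_add, neg_add_cancel, Real.exp_zero]
    nlinarith [Real.exp_pos T]
  have final : T * Real.exp T ≤ ((d * C₁ ^ 2 / 2) * (c ^ 2 / lam ^ 2)) *
      Real.exp (d * C₁ ^ 2 / 2) := by
    apply mul_le_mul hTle (Real.exp_le_exp.mpr hTmax) (Real.exp_pos T).le
    positivity
  calc Real.exp T - 1 ≤ T * Real.exp T := key
    _ ≤ ((d * C₁ ^ 2 / 2) * (c ^ 2 / lam ^ 2)) * Real.exp (d * C₁ ^ 2 / 2) := final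
    _ = d * C₁ ^ 2 / 2 * Real.exp (d * C₁ ^ 2 / 2) * c ^ 2 / lam ^ 2 := by
        field_simp
end
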